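/- arXiv:2004.03530 — 3 statements merged into one kernel-verified Lean document; each statement's English description precedes it below -/
import Mathlib

section
/- For ν > 0, β > 0, α > 0, λ ∈ ℝ, and z > 0, the fractional integration formula (1/Γ(ν)) ∫₀^z (z−s)^{ν−1} s^{β−1} E_{α,β}(λ s^α) ds = z^{β+ν−1} E_{α,β+ν}(λ z^α) holds. -/
open Real MeasureTheory

lemma summable_ml {α c : ℝ} (hα : 0 < α) (hc : 0 < c) {x : ℝ} (hx : 0 ≤ x) :
    Summable (fun k : ℕ => x ^ k / Real.Gamma (α * k + c)) := by
  set y : ℝ := 2 * x + 2 with hy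
  have hy1 : 1 < y := by nlinarith
  set B : ℝ := y ^ (2 / α) with hB
  have hB1 : 1 ≤ B := Real.one_le_rpow hy1.le (by positivity)
  obtain ⟨N₁, hN₁⟩ := (Filter.eventually_atTop).mp
    (((FloorSemiring.tendsto_pow_div_factorial_atTop (K := ℝ) B)).eventually_lt_const
      (by norm_num : (0:ℝ) < 1))
  have key : ∀ᶠ k : ℕ in Filter.atTop, x ^ k / Real.Gamma (α * k + c) ≤ (1/2) ^ k := by
    filter_upwards [Filter.eventually_ge_atTop (⌈(4 + 2*c + 2*N₁)/α⌉₊)] with k hk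
    have hkα : (4 + 2*c + 2*(N₁:ℝ)) / α ≤ (k : ℝ) := le_trans (Nat.le_ceil _) (by exact_mod_cast hk)
    have hαk : 4 + 2*c + 2*(N₁:ℝ) ≤ α * k := by rw [div_le_iff₀ hα] at hkα; linarith
    set t : ℝ := α * k + c with ht
    have ht4 : 4 ≤ t := by simp only [ht]; nlinarith [(Nat.cast_nonneg N₁ : (0:ℝ) ≤ (N₁:ℝ)), hc]
    have ht0 : 0 ≤ t := by linarith
    have hfl1 : 1 ≤ ⌊t⌋₊ := Nat.le_floor (by push_cast; linarith)
    obtain ⟨n, hn⟩ : ∃ n, ⌊t⌋₊ = n + 1 := ⟨⌊t⌋₊ - 1, (Nat.succ_pred_eq_of_pos hfl1).symm⟩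
    have hfle : ((n:ℝ) + 1) ≤ t := by
      have := Nat.floor_le ht0
      rw [hn] at this; push_cast at this; linarith
    have hflt : t < (n:ℝ) + 2 := by
      have := Nat.lt_floor_add_one t
      rw [hn] at this; push_cast at this; linarith
    have hnN : (N₁ : ℝ) ≤ n := by nlinarith
    have hnhalf : α * k / 2 ≤ (n : ℝ) := by nlinarith
    have h1 : Real.Gamma ((n:ℝ) + 1) ≤ Real.Gamma t := by
      apply Real.Gamma_strictMonoOn_Ici.monotoneOn _ _ hfle
      · have : (2:ℝ) ≤ (n:ℝ) + 1 := by nlinarith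
        exact this
      · exact le_trans (by nlinarith : (2:ℝ) ≤ (n:ℝ)+1) hfle
    rw [Real.Gamma_nat_eq_factorial n] at h1
    have h2 : B ^ n ≤ (n.factorial : ℝ) := by
      have hb := hN₁ n (by exact_mod_cast hnN)
      have hfpos : (0:ℝ) < (n.factorial : ℝ) := by positivity
      rw [div_lt_one hfpos] at hb
      exact hb.le
    have h3 : y ^ k ≤ B ^ n := by
      have : B ^ n = B ^ ((n:ℝ)) := (Real.rpow_natCast B n).symm
      rw [this]
      have hyk : y ^ k = B ^ (α * k / 2 : ℝ) := by
        rw [hB, ← Real.rpow_natCast y k, ← Real.rpow_mul (by linarith : (0:ℝ) ≤ y)]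
        congr 1
        field_simp
      rw [hyk]
      exact Real.rpow_le_rpow_of_exponent_le hB1 hnhalf
    have hGt : y ^ k ≤ Real.Gamma t := le_trans h3 (le_trans h2 h1)
    have hypos : (0:ℝ) < y ^ k := by positivity
    calc x ^ k / Real.Gamma t ≤ x ^ k / y ^ k := by gcongr
      _ = (x / y) ^ k := by rw [div_pow]
      _ ≤ (1/2) ^ k := by
          apply pow_le_pow_left₀ (div_nonneg hx (by linarith))
          rw [div_le_iff₀ (by linarith : (0:ℝ) < y)]; linarith
  have hnn : ∀ k : ℕ, 0 ≤ x ^ k / Real.Gamma (α * k + c) := fun k => by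
    have := Real.Gamma_pos_of_pos (by positivity : (0:ℝ) < α * k + c)
    positivity
  refine summable_of_isBigO_nat (summable_geometric_of_lt_one (r := (1/2:ℝ)) (by norm_num) (by norm_num)) ?_
  refine Asymptotics.IsBigO.of_bound 1 ?_
  filter_upwards [key] with k hk
  rw [one_mul, Real.norm_of_nonneg (hnn k), Real.norm_of_nonneg (by positivity)]
  exact hk

open Real MeasureTheory intervalIntegral

lemma betaInt_integrable {a b z : ℝ} (ha : 0 < a) (hb : 0 < b) (hz : 0 < z) :
    IntervalIntegrable (fun s => s ^ (a-1) * (z - s) ^ (b-1)) volume 0 z := by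
  have h1 : IntervalIntegrable (fun s => s ^ (a-1) * (z - s) ^ (b-1)) volume 0 (z/2) := by
    apply IntervalIntegrable.mul_continuousOn
    · exact intervalIntegral.intervalIntegrable_rpow' (by linarith)
    · intro x hx
      rw [Set.uIcc_of_le (by linarith : (0:ℝ) ≤ z/2)] at hx
      apply ContinuousAt.continuousWithinAt
      exact ((continuous_const.sub continuous_id).continuousAt).rpow_const
        (Or.inl (by intro h; simp only [Function.id_def, Pi.sub_apply] at h; nlinarith [hx.2]))
  have h2 : IntervalIntegrable (fun s => s ^ (a-1) * (z - s) ^ (b-1)) volume (z/2) z := by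
    apply IntervalIntegrable.continuousOn_mul
    · have : IntervalIntegrable (fun s : ℝ => s ^ (b-1)) volume 0 (z/2) :=
        intervalIntegral.intervalIntegrable_rpow' (by linarith)
      have h2 := (this.comp_sub_left z).symm
      norm_num at h2
      rw [show z - z/2 = z/2 by ring] at h2
      exact h2
    · intro x hx
      rw [Set.uIcc_of_le (by linarith : z/2 ≤ z)] at hx
      apply ContinuousAt.continuousWithinAt
      exact (continuous_id.continuousAt).rpow_const
        (Or.inl (by intro h; simp only [Function.id_def] at h; nlinarith [hx.1]))
  exact h1.trans h2

lemma betaInt_value {a b z : ℝ} (ha : 0 < a) (hb : 0 < b) (hz : 0 < z) :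
    ∫ s in (0:ℝ)..z, s ^ (a-1) * (z - s) ^ (b-1)
      = Real.Gamma a * Real.Gamma b / Real.Gamma (a+b) * z ^ (a+b-1) := by
  have hGab : Complex.Gamma ((a:ℂ) + b) ≠ 0 := by
    rw [(by push_cast; ring : (a:ℂ) + b = ((a+b : ℝ) : ℂ)), Complex.Gamma_ofReal]
    exact_mod_cast (Real.Gamma_pos_of_pos (by linarith : (0:ℝ) < a + b)).ne'
  have hbeta : Complex.betaIntegral a b
      = ((Real.Gamma a * Real.Gamma b / Real.Gamma (a+b) : ℝ) : ℂ) := by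
    have h := Complex.Gamma_mul_Gamma_eq_betaIntegral (s := (a:ℂ)) (t := (b:ℂ))
      (by simpa using ha) (by simpa using hb)
    have : Complex.betaIntegral a b = Complex.Gamma a * Complex.Gamma b / Complex.Gamma ((a:ℂ)+b) := by
      rw [eq_div_iff hGab]
      linear_combination -h
    rw [this, (by push_cast; ring : (a:ℂ) + b = ((a+b : ℝ) : ℂ)), Complex.Gamma_ofReal,
      Complex.Gamma_ofReal, Complex.Gamma_ofReal]
    push_cast
    ring
  have hscaled := Complex.betaIntegral_scaled (a:ℂ) (b:ℂ) hz
  have hcast : (↑(∫ s in (0:ℝ)..z, s ^ (a-1) * (z - s) ^ (b-1)) : ℂ)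
      = ∫ s in (0:ℝ)..z, (s:ℂ) ^ ((a:ℂ)-1) * ((z:ℂ) - s) ^ ((b:ℂ)-1) := by
    rw [← intervalIntegral.integral_ofReal]
    apply intervalIntegral.integral_congr
    intro s hs
    rw [Set.uIcc_of_le hz.le] at hs
    dsimp only
    rw [Complex.ofReal_mul, Complex.ofReal_cpow hs.1, Complex.ofReal_cpow (by linarith [hs.2])]
    push_cast
    ring
  have hzc : (z:ℂ) ^ ((a:ℂ) + (b:ℂ) - 1) = ((z ^ (a+b-1) : ℝ) : ℂ) := by
    rw [Complex.ofReal_cpow hz.le]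
    congr 1
    push_cast
    ring
  have hfin := hcast.trans (hscaled.trans (by rw [hbeta, hzc, ← Complex.ofReal_mul]))
  rw [mul_comm]
  exact_mod_cast hfin

noncomputable def mlE (α β x : ℝ) : ℝ :=
  ∑' k : ℕ, x ^ k / Real.Gamma (α * k + β)

/-- Fractional integration formula for the Mittag-Leffler function:
`(1/Γ(ν)) ∫₀^z (z−s)^{ν−1} s^{β−1} E_{α,β}(λ s^α) ds = z^{β+ν−1} E_{α,β+ν}(λ z^α)`. -/
theorem mittagLeffler_fracInt (ν β α lam z : ℝ) (hν : 0 < ν) (hβ : 0 < β) (hα : 0 < α)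
    (hz : 0 < z) :
    (1 / Real.Gamma ν) *
        ∫ s in (0:ℝ)..z, (z - s) ^ (ν - 1) * s ^ (β - 1) * mlE α β (lam * s ^ α)
      = z ^ (β + ν - 1) * mlE α (β + ν) (lam * z ^ α) := by
  set g : ℕ → ℝ → ℝ :=
    fun k s => (lam ^ k / Real.Gamma (α * k + β)) * (s ^ (α * k + β - 1) * (z - s) ^ (ν - 1))
    with hg
  have hak : ∀ k : ℕ, (0:ℝ) < α * k + β := fun k => by positivity
  have hGak : ∀ k : ℕ, (0:ℝ) < Real.Gamma (α * k + β) := fun k => Real.Gamma_pos_of_pos (hak k)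
  -- integrability of each term
  have hF_int : ∀ k : ℕ, Integrable (g k) (volume.restrict (Set.Ioc (0:ℝ) z)) := by
    intro k
    have h1 := (intervalIntegrable_iff_integrableOn_Ioc_of_le hz.le).mp
      (betaInt_integrable (hak k) hν hz)
    exact h1.const_mul _
  -- value of each term integral
  have hval : ∀ k : ℕ, ∫ s in Set.Ioc (0:ℝ) z, g k s
      = (Real.Gamma ν * z ^ (β + ν - 1)) * ((lam * z ^ α) ^ k / Real.Gamma (α * k + (β + ν))) := by
    intro k
    simp only [hg]
    rw [MeasureTheory.integral_const_mul]
    rw [← intervalIntegral.integral_of_le hz.le]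
    rw [betaInt_value (hak k) hν hz]
    have e1 : (lam * z ^ α) ^ k = lam ^ k * z ^ (α * (k:ℝ)) := by
      rw [mul_pow, ← Real.rpow_natCast (z ^ α) k, ← Real.rpow_mul hz.le]
    have e2 : z ^ (α * (k:ℝ) + β + ν - 1) = z ^ (α * (k:ℝ)) * z ^ (β + ν - 1) := by
      rw [← Real.rpow_add hz]
      ring_nf
    have e3 : α * (k:ℝ) + β + ν = α * (k:ℝ) + (β + ν) := by ring
    rw [e3] at e2 ⊢
    rw [e1, e2]
    have hG2 : (0:ℝ) < Real.Gamma (α * (k:ℝ) + (β + ν)) :=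
      Real.Gamma_pos_of_pos (by positivity)
    field_simp
  -- the norm integrals and their summability
  have hnorm : ∀ k : ℕ, ∫ s in Set.Ioc (0:ℝ) z, ‖g k s‖
      = (Real.Gamma ν * z ^ (β + ν - 1)) * ((|lam| * z ^ α) ^ k / Real.Gamma (α * k + (β + ν))) := by
    intro k
    have habs : ∀ s ∈ Set.Ioc (0:ℝ) z, ‖g k s‖
        = (|lam| ^ k / Real.Gamma (α * k + β)) * (s ^ (α * k + β - 1) * (z - s) ^ (ν - 1)) := by
      intro s hs
      have h1 : (0:ℝ) ≤ s ^ (α * k + β - 1) := Real.rpow_nonneg hs.1.le _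
      have h2 : (0:ℝ) ≤ (z - s) ^ (ν - 1) := Real.rpow_nonneg (by linarith [hs.2]) _
      simp only [hg]
      rw [Real.norm_eq_abs, abs_mul, abs_div, abs_pow, abs_of_pos (hGak k),
        abs_of_nonneg (mul_nonneg h1 h2)]
    rw [MeasureTheory.setIntegral_congr_fun measurableSet_Ioc habs]
    rw [MeasureTheory.integral_const_mul, ← intervalIntegral.integral_of_le hz.le,
      betaInt_value (hak k) hν hz]
    have e1 : (|lam| * z ^ α) ^ k = |lam| ^ k * z ^ (α * (k:ℝ)) := by
      rw [mul_pow, ← Real.rpow_natCast (z ^ α) k, ← Real.rpow_mul hz.le]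
    have e2 : z ^ (α * (k:ℝ) + β + ν - 1) = z ^ (α * (k:ℝ)) * z ^ (β + ν - 1) := by
      rw [← Real.rpow_add hz]
      ring_nf
    have e3 : α * (k:ℝ) + β + ν = α * (k:ℝ) + (β + ν) := by ring
    rw [e3] at e2 ⊢
    rw [e1, e2]
    have hG2 : (0:ℝ) < Real.Gamma (α * (k:ℝ) + (β + ν)) :=
      Real.Gamma_pos_of_pos (by positivity)
    field_simp
  have hF_sum : Summable (fun k : ℕ => ∫ s in Set.Ioc (0:ℝ) z, ‖g k s‖) := by
    have hbase : Summable (fun k : ℕ => (|lam| * z ^ α) ^ k / Real.Gamma (α * k + (β + ν))) :=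
      summable_ml hα (by linarith) (by positivity)
    exact (hbase.mul_left (Real.Gamma ν * z ^ (β + ν - 1))).congr (fun k => (hnorm k).symm)
  -- pointwise identity on Ioc
  have hIoc : ∀ s ∈ Set.Ioc (0:ℝ) z,
      (z - s) ^ (ν - 1) * s ^ (β - 1) * mlE α β (lam * s ^ α) = ∑' k : ℕ, g k s := by
    intro s hs
    rw [mlE, ← tsum_mul_left]
    apply tsum_congr
    intro k
    have e1 : (lam * s ^ α) ^ k = lam ^ k * s ^ (α * (k:ℝ)) := by
      rw [mul_pow, ← Real.rpow_natCast (s ^ α) k, ← Real.rpow_mul hs.1.le]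
    have e2 : s ^ (α * (k:ℝ) + β - 1) = s ^ (α * (k:ℝ)) * s ^ (β - 1) := by
      rw [← Real.rpow_add hs.1]
      ring_nf
    simp only [hg]
    rw [e1, e2]
    ring
  -- main computation
  have key : (∫ s in (0:ℝ)..z, (z - s) ^ (ν - 1) * s ^ (β - 1) * mlE α β (lam * s ^ α))
      = Real.Gamma ν * (z ^ (β + ν - 1) * mlE α (β + ν) (lam * z ^ α)) := by
    rw [intervalIntegral.integral_of_le hz.le]
    rw [MeasureTheory.setIntegral_congr_fun measurableSet_Ioc hIoc]
    rw [← MeasureTheory.integral_tsum_of_summable_integral_norm hF_int hF_sum]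
    rw [tsum_congr hval, tsum_mul_left, mlE]
    ring
  rw [key, one_div, ← mul_assoc, inv_mul_cancel₀ (Real.Gamma_pos_of_pos hν).ne', one_mul]
end

section
/- For α > 0 and t > 0, the derivative of t ↦ E_{α,1}(m t^α) equals m t^{α−1} E_{α,α}(m t^α). -/
open Real Filter Nat

set_option maxHeartbeats 1000000 in
lemma gamma_term_summable (α β : ℝ) (hα : 0 < α) (hβ : 0 < β) (R : ℝ) (hR : 0 ≤ R) :
    Summable (fun k : ℕ => ((k : ℝ) + 1) * R ^ k / Real.Gamma (α * k + β)) := by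
  set M : ℝ := (2 * R + 2) ^ (α⁻¹) with hMdef
  have h2R : (1 : ℝ) < 2 * R + 2 := by linarith
  have h2R0 : (0 : ℝ) < 2 * R + 2 := by linarith
  have hM1 : 1 < M := by
    rw [hMdef, Real.one_lt_rpow_iff_of_pos h2R0]
    exact Or.inl ⟨h2R, by positivity⟩
  have hM0 : 0 < M := lt_trans one_pos hM1
  have hMα : M ^ α = 2 * R + 2 := by
    rw [hMdef, ← Real.rpow_mul h2R0.le, inv_mul_cancel₀ hα.ne', Real.rpow_one]
  -- eventually n! ≥ M ^ n
  have h1 : Tendsto (fun n : ℕ => M ^ n / n !) atTop (nhds 0) :=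
    (Real.summable_pow_div_factorial M).tendsto_atTop_zero
  have h2 : ∀ᶠ n : ℕ in atTop, M ^ n ≤ (n ! : ℝ) := by
    filter_upwards [h1.eventually (gt_mem_nhds one_pos)] with n hn
    have hfac : (0 : ℝ) < n ! := by positivity
    rw [div_lt_one hfac] at hn
    exact hn.le
  obtain ⟨K, hK⟩ := eventually_atTop.1 h2
  -- eventually α k + β is large
  have h3 : Tendsto (fun k : ℕ => α * k + β) atTop atTop := by
    apply Tendsto.atTop_add _ tendsto_const_nhds
    exact (tendsto_natCast_atTop_atTop).const_mul_atTop hα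
  have h4 : ∀ᶠ k : ℕ in atTop, ((K : ℝ) + 3) ≤ α * k + β :=
    h3.eventually_ge_atTop _
  obtain ⟨K', hK'⟩ := eventually_atTop.1 h4
  -- the comparison series
  set r : ℝ := R / (2 * R + 2) with hrdef
  have hr0 : 0 ≤ r := by positivity
  have hr1 : r < 1 := by
    rw [hrdef, div_lt_one h2R0]; linarith
  have hsum : Summable (fun k : ℕ => M ^ (2 - β) * (((k : ℝ) + 1) * r ^ k)) := by
    apply Summable.mul_left
    have hs1 := summable_pow_mul_geometric_of_norm_lt_one 1 (r := r) (by rwa [Real.norm_eq_abs, abs_of_nonneg hr0])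
    have hs2 := summable_geometric_of_lt_one hr0 hr1
    simpa [add_mul, pow_one, one_mul] using hs1.add hs2
  -- reduce to k ≥ K'
  rw [← summable_nat_add_iff K']
  refine Summable.of_nonneg_of_le (f := fun k : ℕ => M ^ (2 - β) * (((k + K' : ℕ) : ℝ) + 1) * r ^ (k + K')) ?_ ?_ ?_
  · intro k
    have hpos : 0 < Real.Gamma (α * (k + K' : ℕ) + β) :=
      Real.Gamma_pos_of_pos (by positivity)
    positivity
  · intro j
    set k : ℕ := j + K' with hkdef
    have hk : ((K : ℝ) + 3) ≤ α * k + β := hK' k (by omega)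
    set x : ℝ := α * k + β with hxdef
    have hx0 : 0 < x := by linarith
    have hGpos : 0 < Real.Gamma x := Real.Gamma_pos_of_pos hx0
    set n : ℕ := ⌊x - 1⌋₊ with hndef
    have hn1 : (n : ℝ) ≤ x - 1 := Nat.floor_le (by linarith)
    have hn2 : x - 2 ≤ (n : ℝ) := by
      have := Nat.sub_one_lt_floor (x - 1)
      linarith [Nat.lt_floor_add_one (x - 1)]
    have hnK : K ≤ n := Nat.le_floor (by linarith : (K : ℝ) ≤ x - 1)
    have hfac : M ^ n ≤ (n ! : ℝ) := hK n hnK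
    -- Gamma x ≥ n !
    have hmono : (n ! : ℝ) ≤ Real.Gamma x := by
      rw [← Real.Gamma_nat_eq_factorial]
      have h21 : (2 : ℝ) ≤ (n : ℝ) + 1 := by
        have : (K : ℝ) + 0 ≤ n := by exact_mod_cast Nat.cast_le.mpr hnK
        linarith [Nat.cast_nonneg (α := ℝ) K]
      have h22 : (2 : ℝ) ≤ x := by linarith
      rcases eq_or_lt_of_le (by linarith : (n : ℝ) + 1 ≤ x) with h | h
      · rw [show ((n : ℝ) + 1) = x from h]
      · exact (Real.Gamma_strictMonoOn_Ici (by simpa using h21) (by simpa using h22) h).le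
    -- M ^ n ≥ M ^ (x - 2) ≥ (2R+2)^k * M^(β-2)
    have hrpow : M ^ (x - 2) ≤ M ^ n := by
      rw [← Real.rpow_natCast M n]
      exact (Real.rpow_le_rpow_left_iff hM1).2 hn2
    have hsplit : M ^ (x - 2) = (2 * R + 2) ^ (k : ℕ) * M ^ (β - 2) := by
      rw [hxdef, show α * (k : ℕ) + β - 2 = α * (k : ℕ) + (β - 2) by ring,
        Real.rpow_add hM0, Real.rpow_mul hM0.le, hMα, Real.rpow_natCast]
    have hG : (2 * R + 2) ^ (k : ℕ) * M ^ (β - 2) ≤ Real.Gamma x := by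
      rw [← hsplit]; exact hrpow.trans (hfac.trans hmono)
    have hGpos2 : (0 : ℝ) < (2 * R + 2) ^ (k : ℕ) * M ^ (β - 2) := by positivity
    have hnum : (0 : ℝ) ≤ ((k : ℝ) + 1) * R ^ k := by positivity
    calc ((k : ℝ) + 1) * R ^ k / Real.Gamma x
        ≤ ((k : ℝ) + 1) * R ^ k / ((2 * R + 2) ^ (k : ℕ) * M ^ (β - 2)) :=
          div_le_div_of_nonneg_left hnum hGpos2 hG
      _ = M ^ (2 - β) * ((k : ℝ) + 1) * r ^ k := by
          rw [hrdef, div_pow, show (2 : ℝ) - β = -(β - 2) by ring, Real.rpow_neg hM0.le]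
          ring
  · have hsum' : Summable (fun k : ℕ => M ^ (2 - β) * ((k : ℝ) + 1) * r ^ k) := by
      exact hsum.congr fun k => (mul_assoc _ _ _).symm
    exact (summable_nat_add_iff K').2 hsum'

noncomputable def mlF (α m : ℝ) (k : ℕ) (τ : ℝ) : ℝ :=
  (m * τ ^ α) ^ k / Real.Gamma (α * k + 1)

noncomputable def mlF' (α m : ℝ) (k : ℕ) (τ : ℝ) : ℝ :=
  ((k : ℝ) * (m * τ ^ α) ^ (k - 1) * (m * (α * τ ^ (α - 1)))) / Real.Gamma (α * k + 1)

set_option maxHeartbeats 1000000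

/-- `d/dt E_{α,1}(m t^α) = m t^{α−1} E_{α,α}(m t^α)` for `α > 0`, `t > 0`. -/
theorem deriv_mittagLeffler_one (α m t : ℝ) (hα : 0 < α) (ht : 0 < t) :
    HasDerivAt (fun τ : ℝ => mlE α 1 (m * τ ^ α))
      (m * t ^ (α - 1) * mlE α α (m * t ^ α)) t := by
  have ht2 : (0 : ℝ) < t / 2 := by linarith
  set A : ℝ := max 1 (|m| * (2 * t) ^ α) with hAdef
  have hA1 : (1 : ℝ) ≤ A := le_max_left _ _
  have hA0 : (0 : ℝ) ≤ A := by linarith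
  set B : ℝ := max ((t / 2) ^ (α - 1)) ((2 * t) ^ (α - 1)) with hBdef
  have hB0 : (0 : ℝ) ≤ B := le_trans (Real.rpow_nonneg ht2.le _) (le_max_left _ _)
  set C : ℝ := |m| * (α * B) with hCdef
  have hC0 : (0 : ℝ) ≤ C := by positivity
  set u : ℕ → ℝ := fun k => ((k : ℝ) + 1) * A ^ k / Real.Gamma (α * k + 1) * C with hudef
  have hu : Summable u := (gamma_term_summable α 1 hα one_pos A hA0).mul_right C
  have hGpos : ∀ k : ℕ, (0 : ℝ) < Real.Gamma (α * k + 1) := fun k =>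
    Real.Gamma_pos_of_pos (by positivity)
  have hderiv : ∀ (k : ℕ) (τ : ℝ), τ ∈ Set.Ioo (t / 2) (2 * t) →
      HasDerivAt (mlF α m k) (mlF' α m k τ) τ := by
    intro k τ hτ
    have hτ0 : 0 < τ := lt_trans ht2 hτ.1
    have h1 : HasDerivAt (fun τ : ℝ => m * τ ^ α) (m * (α * τ ^ (α - 1))) τ :=
      (Real.hasDerivAt_rpow_const (Or.inl hτ0.ne')).const_mul m
    exact (h1.pow k).div_const (Real.Gamma (α * k + 1))
  have hbound : ∀ (k : ℕ) (τ : ℝ), τ ∈ Set.Ioo (t / 2) (2 * t) → ‖mlF' α m k τ‖ ≤ u k := by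
    intro k τ hτ
    have hτ0 : 0 < τ := lt_trans ht2 hτ.1
    have hxA : |m * τ ^ α| ≤ A := by
      rw [abs_mul, abs_of_nonneg (Real.rpow_nonneg hτ0.le α)]
      refine le_trans ?_ (le_max_right _ _)
      exact mul_le_mul_of_nonneg_left
        (Real.rpow_le_rpow hτ0.le hτ.2.le hα.le) (abs_nonneg m)
    have hXk : |(m * τ ^ α) ^ (k - 1)| ≤ A ^ k := by
      rw [abs_pow]
      exact le_trans (pow_le_pow_left₀ (abs_nonneg _) hxA _)
        (pow_le_pow_right₀ hA1 (Nat.sub_le k 1))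
    have hτB : τ ^ (α - 1) ≤ B := by
      rcases le_or_gt 0 (α - 1) with h | h
      · exact le_trans (Real.rpow_le_rpow hτ0.le hτ.2.le h) (le_max_right _ _)
      · exact le_trans (Real.rpow_le_rpow_of_nonpos ht2 hτ.1.le h.le) (le_max_left _ _)
    have hτB0 : (0 : ℝ) ≤ τ ^ (α - 1) := Real.rpow_nonneg hτ0.le _
    have hnum : |(k : ℝ) * (m * τ ^ α) ^ (k - 1) * (m * (α * τ ^ (α - 1)))| ≤
        ((k : ℝ) + 1) * A ^ k * C := by
      rw [abs_mul, abs_mul, abs_mul, Nat.abs_cast, abs_of_nonneg (by positivity : (0:ℝ) ≤ α * τ ^ (α - 1)), hCdef]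
      gcongr <;> first | exact hXk | exact hτB | linarith
    rw [mlF', Real.norm_eq_abs, abs_div, abs_of_pos (hGpos k)]
    exact le_trans ((div_le_div_iff_of_pos_right (hGpos k)).2 hnum)
      (le_of_eq (div_mul_eq_mul_div _ _ _).symm)
  have hsum0 : Summable (fun k => mlF α m k t) := by
    refine Summable.of_norm_bounded (gamma_term_summable α 1 hα one_pos A hA0) ?_
    intro k
    rw [mlF, Real.norm_eq_abs, abs_div, abs_of_pos (hGpos k), abs_pow]
    apply (div_le_div_iff_of_pos_right (hGpos k)).2
    have hxA : |m * t ^ α| ≤ A := by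
      rw [abs_mul, abs_of_nonneg (Real.rpow_nonneg ht.le α)]
      refine le_trans ?_ (le_max_right _ _)
      exact mul_le_mul_of_nonneg_left
        (Real.rpow_le_rpow ht.le (by linarith) hα.le) (abs_nonneg m)
    calc |m * t ^ α| ^ k ≤ A ^ k := pow_le_pow_left₀ (abs_nonneg _) hxA k
      _ ≤ ((k : ℝ) + 1) * A ^ k := by nlinarith [pow_nonneg hA0 k]
  have hts : t ∈ Set.Ioo (t / 2) (2 * t) := ⟨by linarith, by linarith⟩
  have H := hasDerivAt_tsum_of_isPreconnected hu isOpen_Ioo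
    (convex_Ioo (t / 2) (2 * t)).isPreconnected hderiv hbound hts hsum0 hts
  have hsumf' : Summable (fun k => mlF' α m k t) :=
    Summable.of_norm_bounded hu fun k => hbound k t hts
  have h0 : mlF' α m 0 t = 0 := by simp [mlF']
  have hterm : ∀ k : ℕ, mlF' α m (k + 1) t =
      m * t ^ (α - 1) * ((m * t ^ α) ^ k / Real.Gamma (α * k + α)) := by
    intro k
    have hpos : (0 : ℝ) < α * k + α := by positivity
    have hne : Real.Gamma (α * k + α) ≠ 0 := (Real.Gamma_pos_of_pos hpos).ne'
    rw [mlF', show α * ((k : ℕ) + 1 : ℕ) + 1 = (α * k + α) + 1 by push_cast; ring,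
      Real.Gamma_add_one hpos.ne', Nat.add_sub_cancel]
    push_cast
    field_simp
  have key : (∑' k, mlF' α m k t) = m * t ^ (α - 1) * mlE α α (m * t ^ α) := by
    rw [Summable.tsum_eq_zero_add hsumf', h0, zero_add, tsum_congr hterm, tsum_mul_left]
    rfl
  exact key ▸ H
end

section
/- Let 1 < α ≤ 2 and m ∈ ℝ. Then D^{α−1}[t^{α−2} E_{α,α−1}(m t^α)](t) = m t^{α−1} E_{α,α}(m t^α) for t > 0, where D^{α−1} is the Riemann-Liouville derivative of order α−1; in particular, this fractional derivative tends to 0 as t → 0+. -/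
/-- Riemann-Liouville fractional derivative of order `γ ∈ (0,1]`
(ordinary derivative for `γ = 1`). -/
noncomputable def rlD (γ : ℝ) (u : ℝ → ℝ) (t : ℝ) : ℝ :=
  if γ = 1 then deriv u t
  else deriv (fun τ : ℝ =>
    (1 / Real.Gamma (1 - γ)) * ∫ s in (0:ℝ)..τ, (τ - s) ^ (-γ) * u s) t

open Real MeasureTheory Set Filter intervalIntegral

lemma summable_ml_s7 {a b : ℝ} (ha : 1 < a) (hb : 0 < b) {r : ℝ} (hr : 0 ≤ r) :
    Summable (fun k : ℕ => (k + 1 : ℝ) * r ^ k / Real.Gamma (a * k + b)) := by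
  obtain ⟨N, hN⟩ := exists_nat_ge ((1 - b) / (a - 1))
  rw [← summable_nat_add_iff (f := fun k : ℕ => (k + 1 : ℝ) * r ^ k / Real.Gamma (a * k + b)) (N + 1)]
  have key : ∀ k : ℕ, (((k + (N + 1) : ℕ)) + 1 : ℝ) * r ^ (k + (N + 1)) /
      Real.Gamma (a * (k + (N + 1) : ℕ) + b) ≤ 2 * (2 * r) ^ (k + (N + 1)) / (Nat.factorial (k + (N + 1)) : ℝ) := by
    intro k
    set n : ℕ := k + (N + 1) with hn
    have hn1 : (1 : ℕ) ≤ n := by omega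
    have hNn : (N : ℝ) ≤ n := by exact_mod_cast Nat.le_of_lt (by omega)
    have h2n : (2 : ℝ) ≤ (n : ℝ) + 1 := by
      have : (1:ℝ) ≤ (n:ℝ) := by exact_mod_cast hn1
      linarith
    have hle : (n : ℝ) + 1 ≤ a * n + b := by
      have h1 : (1 - b) / (a - 1) ≤ (n : ℝ) := le_trans hN hNn
      have h2 : 1 - b ≤ (a - 1) * n := by
        rw [div_le_iff₀ (by linarith)] at h1; linarith [h1]
      nlinarith
    have hGam : (Nat.factorial n : ℝ) ≤ Real.Gamma (a * n + b) := by
      rw [← Real.Gamma_nat_eq_factorial]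
      push_cast
      exact (Real.Gamma_strictMonoOn_Ici.monotoneOn (by simpa using h2n)
        (by simp only [mem_Ici]; linarith) hle)
    have hGpos : (0:ℝ) < (Nat.factorial n : ℝ) := by positivity
    calc ((n : ℝ) + 1) * r ^ n / Real.Gamma (a * n + b)
        ≤ ((n : ℝ) + 1) * r ^ n / (Nat.factorial n : ℝ) := by gcongr
      _ ≤ (2 * 2 ^ n) * r ^ n / (Nat.factorial n : ℝ) := by
          gcongr
          have : (n : ℝ) + 1 ≤ 2 ^ n * 2 := by
            have := Nat.lt_two_pow_self (n := n)
            have : (n : ℝ) < 2 ^ n := by exact_mod_cast this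
            nlinarith [this]
          linarith [this]
      _ = 2 * (2 * r) ^ n / (Nat.factorial n : ℝ) := by rw [mul_pow]; ring
  refine Summable.of_nonneg_of_le (fun k => by positivity) key ?_
  have hs : Summable (fun n : ℕ => 2 * (2 * r) ^ n / (Nat.factorial n : ℝ)) := by
    simpa [mul_div_assoc] using (Real.summable_pow_div_factorial (2 * r)).mul_left 2
  exact (summable_nat_add_iff (f := fun n : ℕ => 2 * (2 * r) ^ n / (Nat.factorial n : ℝ)) (N + 1)).2 hs

lemma summable_ml' {a b : ℝ} (ha : 1 < a) (hb : 0 < b) {r : ℝ} (hr : 0 ≤ r) :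
    Summable (fun k : ℕ => r ^ k / Real.Gamma (a * k + b)) := by
  apply Summable.of_nonneg_of_le (fun k => by positivity) _ (summable_ml_s7 ha hb hr)
  intro k
  have hΓ : 0 < Real.Gamma (a * k + b) := Real.Gamma_pos_of_pos (by positivity)
  rw [div_le_div_iff₀ hΓ hΓ]
  nlinarith [pow_nonneg hr k, (Nat.cast_nonneg k : (0:ℝ) ≤ k), hΓ.le,
    mul_nonneg (mul_nonneg (Nat.cast_nonneg k : (0:ℝ) ≤ k) (pow_nonneg hr k)) hΓ.le]

lemma real_beta {p q : ℝ} (hp : 0 < p) (hq : 0 < q) :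
    ∫ x in (0:ℝ)..1, x ^ (p - 1) * (1 - x) ^ (q - 1)
      = Real.Gamma p * Real.Gamma q / Real.Gamma (p + q) := by
  have h := Complex.Gamma_mul_Gamma_eq_betaIntegral
    (s := (p : ℂ)) (t := (q : ℂ)) (by simpa using hp) (by simpa using hq)
  have hB : Complex.betaIntegral (p : ℂ) (q : ℂ)
      = ((∫ x in (0:ℝ)..1, x ^ (p - 1) * (1 - x) ^ (q - 1) : ℝ) : ℂ) := by
    rw [Complex.betaIntegral, ← intervalIntegral.integral_ofReal]
    apply intervalIntegral.integral_congr
    intro x hx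
    rw [uIcc_of_le (by norm_num : (0:ℝ) ≤ 1)] at hx
    have hx0 : (0:ℝ) ≤ x := hx.1
    have hx1 : (0:ℝ) ≤ 1 - x := by linarith [hx.2]
    dsimp only
    rw [Complex.ofReal_mul, Complex.ofReal_cpow hx0, Complex.ofReal_cpow hx1]
    push_cast
    ring
  rw [hB, show ((p:ℂ) + (q:ℂ)) = (((p + q : ℝ)) : ℂ) by push_cast; ring,
    Complex.Gamma_ofReal, Complex.Gamma_ofReal, Complex.Gamma_ofReal,
    ← Complex.ofReal_mul, ← Complex.ofReal_mul] at h
  have h' := Complex.ofReal_inj.mp h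
  have hΓ : Real.Gamma (p + q) ≠ 0 := (Real.Gamma_pos_of_pos (by linarith)).ne'
  field_simp
  linarith [h']

lemma beta_intble {τ p q : ℝ} (hτ : 0 < τ) (hp : 0 < p) (hq : 0 < q) :
    IntervalIntegrable (fun s => s ^ (p - 1) * (τ - s) ^ (q - 1)) volume 0 τ := by
  have left : ∀ p' q' : ℝ, 0 < p' →
      IntervalIntegrable (fun s => s ^ (p' - 1) * (τ - s) ^ (q' - 1)) volume 0 (τ / 2) := by
    intro p' q' hp'
    apply IntervalIntegrable.mul_continuousOn (intervalIntegrable_rpow' (by linarith))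
    apply ContinuousOn.rpow_const (by fun_prop)
    intro x hx
    rw [uIcc_of_le (by linarith : (0:ℝ) ≤ τ / 2)] at hx
    left
    intro h
    have hxτ : x = τ := by linarith [sub_eq_zero.1 h]
    linarith [hx.2]
  have right : IntervalIntegrable (fun s => s ^ (p - 1) * (τ - s) ^ (q - 1)) volume (τ / 2) τ := by
    have h := (left q p hq).comp_sub_left τ
    simp only [sub_sub_cancel, sub_zero] at h
    have hfun : (fun s : ℝ => s ^ (p - 1) * (τ - s) ^ (q - 1))
        = fun x : ℝ => (τ - x) ^ (q - 1) * x ^ (p - 1) := by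
      funext x; ring
    rw [hfun]
    have : τ - τ / 2 = τ / 2 := by ring
    rw [this] at h
    exact h.symm
  exact (left p q hp).trans right

lemma beta_eval {τ p q : ℝ} (hτ : 0 < τ) (hp : 0 < p) (hq : 0 < q) :
    ∫ s in (0:ℝ)..τ, s ^ (p - 1) * (τ - s) ^ (q - 1)
      = τ ^ (p + q - 1) * (Real.Gamma p * Real.Gamma q / Real.Gamma (p + q)) := by
  have h := intervalIntegral.integral_comp_mul_left
    (a := (0:ℝ)) (b := 1) (fun y => y ^ (p - 1) * (τ - y) ^ (q - 1)) hτ.ne'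
  simp only [mul_zero, mul_one] at h
  have h2 : (∫ x in (0:ℝ)..1, (τ * x) ^ (p - 1) * (τ - τ * x) ^ (q - 1))
      = τ ^ (p + q - 2) * (Real.Gamma p * Real.Gamma q / Real.Gamma (p + q)) := by
    rw [← real_beta hp hq, ← intervalIntegral.integral_const_mul]
    apply intervalIntegral.integral_congr
    intro x hx
    rw [uIcc_of_le (by norm_num : (0:ℝ) ≤ 1)] at hx
    have hx0 : (0:ℝ) ≤ x := hx.1
    have hx1 : (0:ℝ) ≤ 1 - x := by linarith [hx.2]
    dsimp only
    rw [show τ - τ * x = τ * (1 - x) by ring,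
      Real.mul_rpow hτ.le hx0, Real.mul_rpow hτ.le hx1,
      show p + q - 2 = (p - 1) + (q - 1) by ring, Real.rpow_add hτ]
    ring
  rw [h2] at h
  rw [show p + q - 1 = 1 + (p + q - 2) by ring, Real.rpow_add hτ, Real.rpow_one]
  have h3 : (∫ s in (0:ℝ)..τ, s ^ (p - 1) * (τ - s) ^ (q - 1))
      = τ * (τ ^ (p + q - 2) * (Real.Gamma p * Real.Gamma q / Real.Gamma (p + q))) := by
    rw [h, smul_eq_mul, ← mul_assoc, mul_inv_cancel₀ hτ.ne', one_mul]
  rw [h3]; ring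

lemma norm_term_le {a b : ℝ} (ha : 0 ≤ a) (hb : 0 < b) (x : ℝ) (k : ℕ) :
    ‖((k : ℝ) * x ^ (k - 1)) / Real.Gamma (a * k + b)‖
      ≤ (k + 1 : ℝ) * (|x| + 1) ^ k / Real.Gamma (a * k + b) := by
  have hΓ : 0 < Real.Gamma (a * k + b) := Real.Gamma_pos_of_pos
    (by nlinarith [Nat.cast_nonneg (α := ℝ) k])
  set R : ℝ := |x| + 1 with hR
  have hR1 : 1 ≤ R := by rw [hR]; linarith [abs_nonneg x]
  rw [norm_div, Real.norm_of_nonneg hΓ.le, div_le_div_iff₀ hΓ hΓ]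
  have : ‖(k : ℝ) * x ^ (k - 1)‖ ≤ (k + 1 : ℝ) * R ^ k := by
    rw [norm_mul, norm_pow, Real.norm_natCast, Real.norm_eq_abs]
    have h1 : |x| ^ (k - 1) ≤ R ^ (k - 1) := by
      apply pow_le_pow_left₀ (abs_nonneg x) (by rw [hR]; linarith)
    have h2 : R ^ (k - 1) ≤ R ^ k := pow_le_pow_right₀ hR1 (Nat.sub_le k 1)
    have h4 : (0:ℝ) ≤ (k:ℝ) := Nat.cast_nonneg k
    nlinarith [pow_nonneg (abs_nonneg x) (k-1), pow_nonneg (le_trans zero_le_one hR1) k]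
  nlinarith [this, hΓ.le, norm_nonneg ((k:ℝ) * x ^ (k - 1))]

lemma summable_deriv_series {a b : ℝ} (ha : 1 < a) (hb : 0 < b) (x : ℝ) :
    Summable (fun k : ℕ => ((k : ℝ) * x ^ (k - 1)) / Real.Gamma (a * k + b)) :=
  Summable.of_norm_bounded (summable_ml_s7 ha hb (by positivity)) (norm_term_le (by linarith) hb x)

lemma shift_id {a : ℝ} (ha : 1 < a) (x : ℝ) :
    ∑' k : ℕ, ((k : ℝ) * x ^ (k - 1)) / Real.Gamma (a * k + 1)
      = a⁻¹ * ∑' k : ℕ, x ^ k / Real.Gamma (a * k + a) := by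
  rw [Summable.tsum_eq_zero_add (summable_deriv_series ha one_pos x)]
  simp only [Nat.cast_zero, zero_mul, zero_div, zero_add, Nat.cast_add, Nat.cast_one,
    Nat.add_sub_cancel]
  rw [← tsum_mul_left]
  apply tsum_congr
  intro j
  have hpos : (0:ℝ) < a * j + a := by positivity
  have h1 : a * ((j : ℝ) + 1) + 1 = (a * j + a) + 1 := by ring
  rw [h1, Real.Gamma_add_one hpos.ne']
  have hΓ : 0 < Real.Gamma (a * j + a) := Real.Gamma_pos_of_pos hpos
  have hj1 : ((j : ℝ) + 1) ≠ 0 := by positivity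
  field_simp

lemma hasDerivAt_g {a b : ℝ} (ha : 1 < a) (hb : 0 < b) (x : ℝ) :
    HasDerivAt (fun y : ℝ => ∑' k : ℕ, y ^ k / Real.Gamma (a * k + b))
      (∑' k : ℕ, ((k : ℝ) * x ^ (k - 1)) / Real.Gamma (a * k + b)) x := by
  set R : ℝ := |x| + 1 with hR
  have hR1 : 1 ≤ R := by rw [hR]; linarith [abs_nonneg x]
  have hxR : x ∈ Ioo (-R) R := by
    constructor
    · have := neg_abs_le x; simp only [hR]; linarith
    · have := le_abs_self x; simp only [hR]; linarith
  refine hasDerivAt_tsum_of_isPreconnected (𝕜 := ℝ) (F := ℝ)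
    (u := fun k : ℕ => (k + 1 : ℝ) * R ^ k / Real.Gamma (a * k + b)) (y₀ := 0)
    (g := fun (k : ℕ) (y : ℝ) => y ^ k / Real.Gamma (a * k + b))
    (g' := fun (k : ℕ) (y : ℝ) => ((k : ℝ) * y ^ (k - 1)) / Real.Gamma (a * k + b))
    (summable_ml_s7 ha hb (by positivity)) (isOpen_Ioo (a := -R) (b := R))
    (convex_Ioo _ _).isPreconnected ?_ ?_ ?_ ?_ hxR
  · intro k y _
    exact (hasDerivAt_pow k y).div_const _
  · intro k y hy
    have hΓ : 0 < Real.Gamma (a * k + b) := Real.Gamma_pos_of_pos (by positivity)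
    rw [norm_div, Real.norm_of_nonneg hΓ.le]
    have hyR : |y| ≤ R := by
      rw [abs_le]; exact ⟨hy.1.le, hy.2.le⟩
    have : ‖(k : ℝ) * y ^ (k - 1)‖ ≤ (k + 1 : ℝ) * R ^ k := by
      rw [norm_mul, norm_pow, Real.norm_natCast, Real.norm_eq_abs]
      have h1 : |y| ^ (k - 1) ≤ R ^ (k - 1) := by
        apply pow_le_pow_left₀ (abs_nonneg y) hyR
      have h2 : R ^ (k - 1) ≤ R ^ k := pow_le_pow_right₀ hR1 (Nat.sub_le k 1)
      have h3 : (k : ℝ) ≤ k + 1 := by linarith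
      have h4 : (0:ℝ) ≤ (k:ℝ) := Nat.cast_nonneg k
      nlinarith [pow_nonneg (abs_nonneg y) (k-1), pow_nonneg (le_trans zero_le_one hR1) k]
    rw [div_le_div_iff₀ hΓ hΓ]
    nlinarith [this, hΓ.le, norm_nonneg ((k:ℝ) * y ^ (k - 1))]
  · exact mem_Ioo.2 ⟨by linarith, by linarith⟩
  · -- summable at y₀ = 0
    apply Summable.of_nonneg_of_le _ _ (summable_ml_s7 ha hb (r := 1) zero_le_one)
    · intro k; positivity
    · intro k
      have hΓ : 0 < Real.Gamma (a * k + b) := Real.Gamma_pos_of_pos (by positivity)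
      have hle : (0:ℝ) ^ k ≤ (k + 1 : ℝ) * 1 ^ k := by
        calc (0:ℝ) ^ k ≤ 1 := by
              rcases Nat.eq_zero_or_pos k with h | h
              · simp [h]
              · rw [zero_pow h.ne']; norm_num
          _ ≤ (k + 1 : ℝ) * 1 ^ k := by
              rw [one_pow, mul_one]; linarith [Nat.cast_nonneg (α := ℝ) k]
      rw [div_le_div_iff₀ hΓ hΓ]
      nlinarith [hle, hΓ.le, pow_nonneg (le_refl (0:ℝ)) k]

lemma integral_rep {α m : ℝ} (hα1 : 1 < α) (hα2 : α < 2) {τ : ℝ} (hτ : 0 < τ) :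
    (1 / Real.Gamma (1 - (α - 1))) *
      ∫ s in (0:ℝ)..τ, (τ - s) ^ (-(α - 1)) * (s ^ (α - 2) * mlE α (α - 1) (m * s ^ α))
      = ∑' k : ℕ, (m * τ ^ α) ^ k / Real.Gamma (α * k + 1) := by
  have hq : (0:ℝ) < 2 - α := by linarith
  have hΓq : 0 < Real.Gamma (2 - α) := Real.Gamma_pos_of_pos hq
  have hppos : ∀ k : ℕ, (0:ℝ) < α * k + (α - 1) := by
    intro k; have := Nat.cast_nonneg (α := ℝ) k; nlinarith
  set F : ℕ → ℝ → ℝ := fun k s =>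
    (m ^ k / Real.Gamma (α * k + (α - 1))) *
      (s ^ ((α * k + (α - 1)) - 1) * (τ - s) ^ ((2 - α) - 1)) with hF
  have hpt : ∀ s ∈ Ioc (0:ℝ) τ,
      (τ - s) ^ (-(α - 1)) * (s ^ (α - 2) * mlE α (α - 1) (m * s ^ α)) = ∑' k, F k s := by
    intro s hs
    obtain ⟨hs0, hsτ⟩ := hs
    rw [show (-(α - 1) : ℝ) = (2 - α) - 1 by ring]
    rw [mlE, ← tsum_mul_left, ← tsum_mul_left]
    apply tsum_congr
    intro k
    have hsk : (m * s ^ α) ^ k = m ^ k * s ^ (α * k) := by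
      rw [mul_pow, ← Real.rpow_natCast (s ^ α) k, ← Real.rpow_mul hs0.le]
    rw [hF]
    dsimp only
    rw [hsk, show (α * (k:ℝ) + (α - 1)) - 1 = (α - 2) + α * (k:ℝ) by ring,
      Real.rpow_add hs0]
    ring
  rw [intervalIntegral.integral_of_le hτ.le, setIntegral_congr_fun measurableSet_Ioc hpt]
  have hint : ∀ k : ℕ, Integrable (F k) (volume.restrict (Ioc (0:ℝ) τ)) := by
    intro k
    have hib := beta_intble hτ (hppos k) hq
    rw [intervalIntegrable_iff_integrableOn_Ioc_of_le hτ.le] at hib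
    exact hib.const_mul _
  have hτα : (0:ℝ) ≤ |m| * τ ^ α := by positivity
  have hτk : ∀ k : ℕ, (τ : ℝ) ^ (α * k) = (τ ^ α) ^ k := by
    intro k; rw [← Real.rpow_natCast (τ ^ α) k, ← Real.rpow_mul hτ.le]
  have hval2 : ∀ k : ℕ, (∫ s in Ioc (0:ℝ) τ, F k s)
      = Real.Gamma (2 - α) * ((m * τ ^ α) ^ k / Real.Gamma (α * k + 1)) := by
    intro k
    have hΓp : 0 < Real.Gamma (α * k + (α - 1)) := Real.Gamma_pos_of_pos (hppos k)
    have hΓ1 : 0 < Real.Gamma (α * (k:ℝ) + (α - 1) + (2 - α)) := by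
      apply Real.Gamma_pos_of_pos; nlinarith [Nat.cast_nonneg (α := ℝ) k]
    rw [hF]
    dsimp only
    rw [MeasureTheory.integral_const_mul, ← intervalIntegral.integral_of_le hτ.le,
      beta_eval hτ (hppos k) hq,
      show α * (k:ℝ) + (α - 1) + (2 - α) - 1 = α * (k:ℝ) by ring,
      show α * (k:ℝ) + (α - 1) + (2 - α) = α * (k:ℝ) + 1 by ring,
      hτk k, mul_pow]
    have hΓ1' : 0 < Real.Gamma (α * (k:ℝ) + 1) := by
      apply Real.Gamma_pos_of_pos; nlinarith [Nat.cast_nonneg (α := ℝ) k]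
    field_simp
  have hnorm : Summable (fun k : ℕ => ∫ s in Ioc (0:ℝ) τ, ‖F k s‖) := by
    have hval : ∀ k : ℕ, (∫ s in Ioc (0:ℝ) τ, ‖F k s‖)
        = Real.Gamma (2 - α) * ((|m| * τ ^ α) ^ k / Real.Gamma (α * k + 1)) := by
      intro k
      have hΓp : 0 < Real.Gamma (α * k + (α - 1)) := Real.Gamma_pos_of_pos (hppos k)
      have heq : EqOn (fun s => ‖F k s‖)
          (fun s => (|m| ^ k / Real.Gamma (α * k + (α - 1))) *
            (s ^ ((α * k + (α - 1)) - 1) * (τ - s) ^ ((2 - α) - 1))) (Ioc (0:ℝ) τ) := by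
        intro s hs
        obtain ⟨hs0, hsτ⟩ := hs
        rw [hF]
        dsimp only
        rw [norm_mul, norm_mul, norm_div, Real.norm_of_nonneg hΓp.le,
          Real.norm_of_nonneg (Real.rpow_nonneg hs0.le _),
          Real.norm_of_nonneg (Real.rpow_nonneg (by linarith) _),
          norm_pow, Real.norm_eq_abs]
      rw [setIntegral_congr_fun measurableSet_Ioc heq,
        MeasureTheory.integral_const_mul, ← intervalIntegral.integral_of_le hτ.le,
        beta_eval hτ (hppos k) hq,
        show α * (k:ℝ) + (α - 1) + (2 - α) - 1 = α * (k:ℝ) by ring,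
        show α * (k:ℝ) + (α - 1) + (2 - α) = α * (k:ℝ) + 1 by ring,
        hτk k, mul_pow]
      have hΓ1' : 0 < Real.Gamma (α * (k:ℝ) + 1) := by
        apply Real.Gamma_pos_of_pos; nlinarith [Nat.cast_nonneg (α := ℝ) k]
      field_simp
    simp only [hval]
    exact (summable_ml' hα1 one_pos hτα).mul_left _
  rw [← MeasureTheory.integral_tsum_of_summable_integral_norm hint hnorm]
  simp only [hval2]
  rw [tsum_mul_left, show (1 - (α - 1) : ℝ) = 2 - α by ring, ← mul_assoc, one_div,
    inv_mul_cancel₀ hΓq.ne', one_mul]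

/-- `D^{α−1}[t^{α−2}E_{α,α−1}(mt^α)](t) = m t^{α−1}E_{α,α}(mt^α)` for `t > 0`,
and this fractional derivative tends to `0` as `t → 0+`. -/
theorem rlD_critical_case (α m : ℝ) (hα1 : 1 < α) (hα2 : α ≤ 2) :
    (∀ t : ℝ, 0 < t →
      rlD (α - 1) (fun s => s ^ (α - 2) * mlE α (α - 1) (m * s ^ α)) t
        = m * t ^ (α - 1) * mlE α α (m * t ^ α)) ∧
    Filter.Tendsto
      (fun t : ℝ => rlD (α - 1) (fun s => s ^ (α - 2) * mlE α (α - 1) (m * s ^ α)) t)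
      (nhdsWithin 0 (Set.Ioi 0)) (nhds 0) := by
  have hα0 : (0:ℝ) < α := by linarith
  have hD : ∀ t : ℝ, 0 < t →
      HasDerivAt (fun τ : ℝ => ∑' k : ℕ, (m * τ ^ α) ^ k / Real.Gamma (α * k + 1))
        (m * t ^ (α - 1) * mlE α α (m * t ^ α)) t := by
    intro t ht
    have h1 : HasDerivAt (fun τ : ℝ => m * τ ^ α) (m * (α * t ^ (α - 1))) t :=
      (Real.hasDerivAt_rpow_const (p := α) (Or.inl ht.ne')).const_mul m
    have h2 := hasDerivAt_g (a := α) (b := 1) hα1 one_pos (m * t ^ α)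
    have h3 := h2.comp t h1
    rw [shift_id hα1 (m * t ^ α)] at h3
    have hval : (α⁻¹ * ∑' k : ℕ, (m * t ^ α) ^ k / Real.Gamma (α * k + α)) *
        (m * (α * t ^ (α - 1))) = m * t ^ (α - 1) * mlE α α (m * t ^ α) := by
      rw [mlE]
      field_simp
    rw [← hval]
    exact h3
  have part1 : ∀ t : ℝ, 0 < t →
      rlD (α - 1) (fun s => s ^ (α - 2) * mlE α (α - 1) (m * s ^ α)) t
        = m * t ^ (α - 1) * mlE α α (m * t ^ α) := by
    intro t ht
    by_cases hcase : α = 2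
    · subst hcase
      rw [rlD, if_pos (by norm_num)]
      have hfun : (fun s : ℝ => s ^ ((2:ℝ) - 2) * mlE 2 (2 - 1) (m * s ^ (2:ℝ)))
          = fun τ : ℝ => ∑' k : ℕ, (m * τ ^ (2:ℝ)) ^ k / Real.Gamma (2 * k + 1) := by
        funext s
        rw [show ((2:ℝ) - 2) = 0 by norm_num, Real.rpow_zero, one_mul, mlE,
          show ((2:ℝ) - 1) = 1 by norm_num]
      rw [hfun]
      exact (hD t ht).deriv
    · rw [rlD, if_neg (fun h => hcase (by linarith [sub_eq_iff_eq_add.mp h]))]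
      have hαlt : α < 2 := lt_of_le_of_ne hα2 hcase
      have heq : (fun τ : ℝ => (1 / Real.Gamma (1 - (α - 1))) *
            ∫ s in (0:ℝ)..τ, (τ - s) ^ (-(α - 1)) *
              ((fun s : ℝ => s ^ (α - 2) * mlE α (α - 1) (m * s ^ α)) s))
          =ᶠ[nhds t] fun τ : ℝ => ∑' k : ℕ, (m * τ ^ α) ^ k / Real.Gamma (α * k + 1) := by
        filter_upwards [isOpen_Ioi.mem_nhds (show t ∈ Ioi (0:ℝ) from ht)] with τ hτ
        exact integral_rep hα1 hαlt hτ
      rw [heq.deriv_eq]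
      exact (hD t ht).deriv
  refine ⟨part1, ?_⟩
  have hA : Tendsto (fun t : ℝ => t ^ (α - 1)) (nhdsWithin 0 (Set.Ioi 0)) (nhds 0) := by
    have h := (Real.continuousAt_rpow_const 0 (α - 1) (Or.inr (by linarith))).tendsto
    rw [Real.zero_rpow (by linarith : α - 1 ≠ 0)] at h
    exact h.mono_left nhdsWithin_le_nhds
  have hB : Tendsto (fun t : ℝ => m * t ^ α) (nhdsWithin 0 (Set.Ioi 0)) (nhds 0) := by
    have h := (Real.continuousAt_rpow_const 0 α (Or.inr hα0.le)).tendsto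
    rw [Real.zero_rpow hα0.ne'] at h
    have h2 := (h.mono_left (nhdsWithin_le_nhds (s := Set.Ioi 0))).const_mul m
    simpa using h2
  have hC : ContinuousAt (fun x : ℝ => mlE α α x) 0 := by
    simp only [mlE]
    exact (hasDerivAt_g hα1 (by linarith) 0).continuousAt
  have hmain : Tendsto (fun t : ℝ => m * t ^ (α - 1) * mlE α α (m * t ^ α))
      (nhdsWithin 0 (Set.Ioi 0)) (nhds 0) := by
    have := ((tendsto_const_nhds (x := m) (f := nhdsWithin (0:ℝ) (Set.Ioi 0))).mul hA).mul
      (hC.tendsto.comp hB)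
    rw [show m * 0 * mlE α α 0 = 0 by ring] at this
    exact this
  apply hmain.congr'
  filter_upwards [self_mem_nhdsWithin] with t ht
  exact (part1 t ht).symm
end
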